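/- Let m ≥ 0 and n ≥ 0, let ε_2, …, ε_{m+2} ∈ {0,1}, and suppose ε_i = 1 exactly for the indices i_1 < i_2 < ⋯ < i_k among {2, …, m+1} (with k ≥ 0), and ε_i = 0 for all other i with 2 ≤ i ≤ m+1. If either (n ≡ 2^{m+1} (mod 2^{m+2}) and k is even) or (n ≡ 0 (mod 2^{m+2}) and k is odd), then: (a) P_{m,0}^{ε_2,…,ε_{m+2}}(n) is empty unless ε_{m+2} = 1, i.e., P_{m,0}^{ε_2,…,ε_{m+1},ε_{m+2}}(n) = P_{m,0}^{ε_2,…,ε_{m+1},1}(n); and (b) the composite σ ∘ τ_{i_1} ∘ τ_{i_2} ∘ ⋯ ∘ τ_{i_k} ∘ τ_{m+2} is a bijection from P_{m,0}^{ε_2,…,ε_{m+2}}(n) onto P_m((n − (k+1)·2^{m+1})/2). In particular |P_{m,0}^{ε_2,…,ε_{m+2}}(n)| = r_m((n − (k+1)·2^{m+1})/2). -/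

import Mathlib

/-- The integer partitioned by the binary partition `α`, where `α i` is the
number of parts equal to `2 ^ i` (so `α i` is the `α_{i+1}` of the paper). -/
def binWeight (α : ℕ →₀ ℕ) : ℕ := α.sum fun i a => a * 2 ^ i

/-- `Pm m n` is the set of binary partitions of `n` satisfying the divisibility
conditions `2 ^ (m + 2 - i) ∣ α_i` for `1 ≤ i ≤ m + 1` (written here with the
index shifted down by one).  For `n < 0` the set is empty. -/
def Pm (m : ℕ) (n : ℤ) : Set (ℕ →₀ ℕ) :=
  {α | (binWeight α : ℤ) = n ∧ ∀ i ≤ m, 2 ^ (m + 1 - i) ∣ α i}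

/-- `r m n` is the number of binary partitions of `n` satisfying the divisibility
conditions `2 ^ (m + 2 - i) ∣ α_i` for `1 ≤ i ≤ m + 1`. -/
noncomputable def r (m : ℕ) (n : ℤ) : ℕ := Nat.card (Pm m n)

/-- `Pm0 m n ε` is the set `P_{m,0}^{ε₂,…,ε_{m+2}}(n)` of partitions in `Pm m n`
with `α₁ = 0` and `α_i ≡ ε_i · 2^(m+2-i) (mod 2^(m+3-i))` for `2 ≤ i ≤ m + 2`;
all indices (of both `α` and `ε`) are shifted down by one here, so the
congruences read `α i ≡ ε i · 2^(m+1-i) (mod 2^(m+2-i))` for `1 ≤ i ≤ m + 1`. -/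
def Pm0 (m : ℕ) (n : ℤ) (ε : ℕ → ℕ) : Set (ℕ →₀ ℕ) :=
  {α | α ∈ Pm m n ∧ α 0 = 0 ∧
    ∀ i, 1 ≤ i → i ≤ m + 1 → α i ≡ ε i * 2 ^ (m + 1 - i) [MOD 2 ^ (m + 2 - i)]}

/-- The map `σ` sending `(α₁, α₂, α₃, …)` to `(α₂, α₃, …)`. -/
noncomputable def sigmaShift (α : ℕ →₀ ℕ) : ℕ →₀ ℕ :=
  Finsupp.comapDomain Nat.succ α (Nat.succ_injective.injOn)

lemma binWeight_add (α β : ℕ →₀ ℕ) : binWeight (α + β) = binWeight α + binWeight β :=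
  Finsupp.sum_add_index' (fun _ => zero_mul _) (fun _ b₁ b₂ => add_mul b₁ b₂ _)

lemma binWeight_single (i a : ℕ) : binWeight (Finsupp.single i a) = a * 2 ^ i :=
  Finsupp.sum_single_index (zero_mul _)

lemma binWeight_mapDomain_succ (β : ℕ →₀ ℕ) :
    binWeight (Finsupp.mapDomain Nat.succ β) = 2 * binWeight β := by
  rw [binWeight, Finsupp.sum_mapDomain_index (h := fun i a => a * 2 ^ i)
    (fun _ => zero_mul _) (fun _ b₁ b₂ => add_mul b₁ b₂ _)]
  rw [binWeight, Finsupp.mul_sum]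
  exact Finsupp.sum_congr fun i _ => by rw [Nat.succ_eq_add_one, pow_succ]; ring

lemma sigmaShift_apply (α : ℕ →₀ ℕ) (i : ℕ) : sigmaShift α i = α (i + 1) :=
  Finsupp.comapDomain_apply _ _ _ _

lemma sigmaShift_mapDomain (β : ℕ →₀ ℕ) : sigmaShift (Finsupp.mapDomain Nat.succ β) = β := by
  ext i
  rw [sigmaShift_apply]
  exact Finsupp.mapDomain_apply Nat.succ_injective β i

lemma mapDomain_sigmaShift (α : ℕ →₀ ℕ) (h : α 0 = 0) :
    Finsupp.mapDomain Nat.succ (sigmaShift α) = α := by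
  ext i
  cases i with
  | zero =>
    rw [h, Finsupp.mapDomain_notin_range]
    simp [Set.range, Nat.succ_ne_zero]
  | succ i =>
    rw [show i + 1 = Nat.succ i from rfl, Finsupp.mapDomain_apply Nat.succ_injective,
      sigmaShift_apply]

lemma binWeight_dvd (α : ℕ →₀ ℕ) (d : ℕ) (h : ∀ i, d ∣ α i * 2 ^ i) : d ∣ binWeight α :=
  Finset.dvd_sum fun i _ => h i

/-- Lemma (odd/even case (1)): with the indices of `ε` shifted down by one (so
`ε j` here is the paper's `ε_{j+1}`), suppose `ε` takes values in `{0,1}` and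
equals `1` on `{1, …, m}` exactly on the set `S` (the paper's `{i₁ < ⋯ < i_k}`),
with `k = |S|`.  If `n ≡ 2^(m+1) (mod 2^(m+2))` and `k` is even, or
`n ≡ 0 (mod 2^(m+2))` and `k` is odd, then:
(a) `P_{m,0}^{ε}(n)` is empty unless `ε_{m+2} = 1`, and
(b) when `ε_{m+2} = 1`, the composite `σ ∘ τ_{i₁} ∘ ⋯ ∘ τ_{i_k} ∘ τ_{m+2}` (which
subtracts `2^(m+1-j)` from the entry at each `j ∈ S ∪ {m+1}` and then shifts) is
a bijection from `P_{m,0}^{ε}(n)` onto `P_m((n - (k+1)·2^(m+1))/2)`; in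
particular `|P_{m,0}^{ε}(n)| = r_m((n - (k+1)·2^(m+1))/2)`. -/
theorem stmt9 (m n : ℕ) (ε : ℕ → ℕ)
    (hε : ∀ j, 1 ≤ j → j ≤ m + 1 → ε j = 0 ∨ ε j = 1)
    (S : Finset ℕ) (hS : S ⊆ Finset.Icc 1 m)
    (hSε : ∀ j, 1 ≤ j → j ≤ m → (ε j = 1 ↔ j ∈ S))
    (k : ℕ) (hk : k = S.card)
    (h : (n % 2 ^ (m + 2) = 2 ^ (m + 1) ∧ Even k) ∨
         (n % 2 ^ (m + 2) = 0 ∧ Odd k)) :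
    (ε (m + 1) = 0 → Pm0 m n ε = ∅) ∧
    (ε (m + 1) = 1 →
      Set.BijOn
        (fun α : ℕ →₀ ℕ => sigmaShift
          (α - (Finsupp.single (m + 1) 1 +
            ∑ j ∈ S, Finsupp.single j (2 ^ (m + 1 - j)))))
        (Pm0 m n ε) (Pm m (((n : ℤ) - (k + 1) * 2 ^ (m + 1)) / 2)) ∧
      Nat.card (Pm0 m n ε) = r m (((n : ℤ) - (k + 1) * 2 ^ (m + 1)) / 2)) := by
  classical
  set cε : ℕ →₀ ℕ :=
    ∑ i ∈ Finset.Icc 1 (m + 1), Finsupp.single i (ε i * 2 ^ (m + 1 - i)) with hcεdef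
  have hcε_apply : ∀ i, cε i =
      if i ∈ Finset.Icc 1 (m + 1) then ε i * 2 ^ (m + 1 - i) else 0 := by
    intro i
    rw [hcεdef, Finsupp.finset_sum_apply]
    simp only [Finsupp.single_apply]
    exact Finset.sum_ite_eq' _ i _
  have hε1 : ∀ i, 1 ≤ i → i ≤ m + 1 → ε i ≤ 1 := fun i h1 h2 => by
    rcases hε i h1 h2 with h' | h' <;> omega
  -- pointwise inequality and divisibility facts for members of Pm0
  have hkey : ∀ α ∈ Pm0 m n ε, (∀ i, cε i ≤ α i) ∧
      (∀ j, 1 ≤ j → j ≤ m + 1 → 2 ^ (m + 2 - j) ∣ α j - cε j) := by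
    rintro α ⟨-, h0, hcong⟩
    have hle : ∀ i, cε i ≤ α i := by
      intro i
      rw [hcε_apply]
      by_cases hi : i ∈ Finset.Icc 1 (m + 1)
      · rw [if_pos hi]
        rw [Finset.mem_Icc] at hi
        have hc := hcong i hi.1 hi.2
        have hlt : ε i * 2 ^ (m + 1 - i) < 2 ^ (m + 2 - i) := by
          have he : m + 2 - i = (m + 1 - i) + 1 := by omega
          rw [he, pow_succ]
          have h1 := hε1 i hi.1 hi.2
          have h2 : 0 < 2 ^ (m + 1 - i) := Nat.pow_pos (by norm_num)
          nlinarith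
        calc ε i * 2 ^ (m + 1 - i) = ε i * 2 ^ (m + 1 - i) % 2 ^ (m + 2 - i) :=
              (Nat.mod_eq_of_lt hlt).symm
          _ = α i % 2 ^ (m + 2 - i) := hc.symm
          _ ≤ α i := Nat.mod_le _ _
      · rw [if_neg hi]
        exact Nat.zero_le _
    refine ⟨hle, fun j h1 h2 => ?_⟩
    have hc := hcong j h1 h2
    have hcj : cε j = ε j * 2 ^ (m + 1 - j) := by
      rw [hcε_apply, if_pos (Finset.mem_Icc.mpr ⟨h1, h2⟩)]
    rw [hcj]
    exact (Nat.modEq_iff_dvd' (hcj ▸ hle j)).mp hc.symm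
  -- sum of ε over Icc 1 m is k
  have hsum : ∑ i ∈ Finset.Icc 1 m, ε i = k := by
    rw [hk, ← Finset.sum_subset hS (fun x hx hxS => ?_)]
    · rw [Finset.card_eq_sum_ones]
      refine Finset.sum_congr rfl fun i hi => ?_
      have hmem := Finset.mem_Icc.mp (hS hi)
      exact (hSε i hmem.1 hmem.2).mpr hi
    · have hx' := Finset.mem_Icc.mp hx
      rcases hε x hx'.1 (by omega) with h' | h'
      · exact h'
      · exact absurd ((hSε x hx'.1 hx'.2).mp h') hxS
  -- binWeight of cε
  have hbcε : binWeight cε = (k + ε (m + 1)) * 2 ^ (m + 1) := by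
    rw [hcεdef, binWeight, ← Finsupp.sum_finset_sum_index (h := fun i a => a * 2 ^ i)
      (fun _ => zero_mul _) (fun _ b₁ b₂ => add_mul b₁ b₂ _)]
    have : ∀ i ∈ Finset.Icc 1 (m + 1),
        (Finsupp.single i (ε i * 2 ^ (m + 1 - i))).sum (fun i a => a * 2 ^ i)
          = ε i * 2 ^ (m + 1) := by
      intro i hi
      have hi' := Finset.mem_Icc.mp hi
      show binWeight (Finsupp.single i (ε i * 2 ^ (m + 1 - i))) = _
      rw [binWeight_single, mul_assoc, ← pow_add]
      congr 2
      omega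
    rw [Finset.sum_congr rfl this, ← Finset.sum_mul,
      Finset.sum_Icc_succ_top (by omega : 1 ≤ m + 1), hsum]
  -- weight decomposition for members of Pm0
  have hdecomp : ∀ α ∈ Pm0 m n ε,
      binWeight α = 2 * binWeight (sigmaShift (α - cε)) + (k + ε (m + 1)) * 2 ^ (m + 1) ∧
      2 ^ (m + 2) ∣ 2 * binWeight (sigmaShift (α - cε)) := by
    intro α hα
    obtain ⟨hle, hdvd⟩ := hkey α hα
    obtain ⟨-, h0, hcong⟩ := hα
    have hγ0 : (α - cε) 0 = 0 := by rw [Finsupp.tsub_apply, h0]; exact Nat.zero_sub _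
    have hmap : Finsupp.mapDomain Nat.succ (sigmaShift (α - cε)) = α - cε :=
      mapDomain_sigmaShift _ hγ0
    have hγw : binWeight (α - cε) = 2 * binWeight (sigmaShift (α - cε)) := by
      conv_lhs => rw [← hmap]
      rw [binWeight_mapDomain_succ]
    have hadd : α - cε + cε = α := tsub_add_cancel_of_le (Finsupp.le_def.mpr hle)
    constructor
    · conv_lhs => rw [← hadd]
      rw [binWeight_add, hγw, hbcε]
    · rw [← hγw]
      apply binWeight_dvd
      intro i
      rcases Nat.lt_or_ge i (m + 2) with hi | hi
      · rcases Nat.eq_zero_or_pos i with h0' | h1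
        · subst h0'; rw [hγ0]; simp
        · rw [Finsupp.tsub_apply]
          have hd := hdvd i h1 (by omega)
          have heq : (2 : ℕ) ^ (m + 2) = 2 ^ (m + 2 - i) * 2 ^ i := by
            rw [← pow_add]; congr 1; omega
          rw [heq]
          exact mul_dvd_mul hd dvd_rfl
      · exact Dvd.dvd.mul_left (pow_dvd_pow 2 hi) _
  have hpos : 0 < 2 ^ (m + 1) := Nat.pow_pos (by norm_num)
  constructor
  · -- part (a)
    intro hεm
    rw [Set.eq_empty_iff_forall_notMem]
    intro α hα
    obtain ⟨hd, hdvd2⟩ := hdecomp α hα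
    obtain ⟨A, hA⟩ := hdvd2
    have hw : binWeight α = n := by exact_mod_cast hα.1.1
    rw [hεm, add_zero] at hd
    have hn : n = 2 ^ (m + 2) * A + k * 2 ^ (m + 1) := by rw [← hw, hd, hA]
    rcases h with ⟨hmod, t, ht⟩ | ⟨hmod, t, ht⟩
    · have hzero : n % 2 ^ (m + 2) = 0 := by
        have : n = (A + t) * 2 ^ (m + 2) := by
          rw [hn, ht, pow_succ]; ring
        rw [this, Nat.mul_mod_left]
      omega
    · have hone : n % 2 ^ (m + 2) = 2 ^ (m + 1) := by
        obtain ⟨t, rfl⟩ : ∃ t', k = 2 * t' + 1 := ⟨t, by omega⟩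
        have : n = 2 ^ (m + 1) + (A + t) * 2 ^ (m + 2) := by
          rw [hn, pow_succ]; ring
        rw [this, Nat.add_mul_mod_self_right]
        exact Nat.mod_eq_of_lt (Nat.pow_lt_pow_right (by norm_num) (by omega))
      omega
  · -- part (b)
    intro hεm
    have hm1S : m + 1 ∉ S := fun hcon => by
      have := Finset.mem_Icc.mp (hS hcon); omega
    have hcc : Finsupp.single (m + 1) 1 +
        ∑ j ∈ S, Finsupp.single j (2 ^ (m + 1 - j)) = cε := by
      ext i
      rw [Finsupp.add_apply, Finsupp.single_apply, Finsupp.finset_sum_apply, hcε_apply]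
      simp only [Finsupp.single_apply]
      rw [Finset.sum_ite_eq' S i]
      by_cases him : i = m + 1
      · subst him
        rw [if_pos rfl, if_neg hm1S, if_pos (Finset.mem_Icc.mpr ⟨by omega, le_refl _⟩), hεm]
        simp
      · rw [if_neg (fun hcon => him hcon.symm), zero_add]
        by_cases hiS : i ∈ S
        · have hi' := Finset.mem_Icc.mp (hS hiS)
          rw [if_pos hiS, if_pos (Finset.mem_Icc.mpr ⟨hi'.1, by omega⟩),
            (hSε i hi'.1 hi'.2).mpr hiS, one_mul]
        · rw [if_neg hiS]
          by_cases hio : i ∈ Finset.Icc 1 (m + 1)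
          · have hi' := Finset.mem_Icc.mp hio
            have hε0 : ε i = 0 := by
              rcases hε i hi'.1 hi'.2 with h' | h'
              · exact h'
              · exact absurd ((hSε i hi'.1 (by omega)).mp h') hiS
            rw [if_pos hio, hε0, zero_mul]
          · rw [if_neg hio]
    -- evenness
    have h2n : 2 ∣ n := by
      have hdm := Nat.div_add_mod n (2 ^ (m + 2))
      have h22 : 2 ∣ 2 ^ (m + 2) := dvd_pow_self 2 (by omega)
      have h21 : 2 ∣ 2 ^ (m + 1) := dvd_pow_self 2 (by omega)
      rcases h with ⟨hmod, -⟩ | ⟨hmod, -⟩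
      · rw [hmod] at hdm
        exact hdm ▸ dvd_add (h22.mul_right _) h21
      · rw [hmod] at hdm
        exact hdm ▸ dvd_add (h22.mul_right _) (dvd_zero 2)
    have h2dvd : (2 : ℤ) ∣ (n : ℤ) - (k + 1) * 2 ^ (m + 1) := by
      refine dvd_sub (by exact_mod_cast Int.natCast_dvd_natCast.mpr h2n) ?_
      exact Dvd.dvd.mul_left (dvd_pow_self 2 (by omega)) _
    have hexact : 2 * (((n : ℤ) - (k + 1) * 2 ^ (m + 1)) / 2)
        = (n : ℤ) - (k + 1) * 2 ^ (m + 1) := Int.mul_ediv_cancel' h2dvd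
    -- the bijection with cε
    have hmaps : Set.MapsTo (fun α => sigmaShift (α - cε)) (Pm0 m n ε)
        (Pm m (((n : ℤ) - (k + 1) * 2 ^ (m + 1)) / 2)) := by
      intro α hα
      obtain ⟨hle, hdvd⟩ := hkey α hα
      obtain ⟨hd, -⟩ := hdecomp α hα
      obtain ⟨⟨hw, -⟩, h0, hcong⟩ := hα
      constructor
      · have hwn : binWeight α = n := by exact_mod_cast hw
        rw [hεm] at hd
        have hcast : (n : ℤ) = 2 * (binWeight (sigmaShift (α - cε)) : ℤ)
            + (k + 1) * 2 ^ (m + 1) := by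
          rw [← hwn, hd]; push_cast; ring
        have : (n : ℤ) - (k + 1) * 2 ^ (m + 1)
            = 2 * (binWeight (sigmaShift (α - cε)) : ℤ) := by linarith
        rw [this, Int.mul_ediv_cancel_left _ (by norm_num)]
      · intro i hi
        rw [sigmaShift_apply, Finsupp.tsub_apply]
        have hd' := hdvd (i + 1) (by omega) (by omega)
        rwa [show m + 2 - (i + 1) = m + 1 - i by omega] at hd'
    have hinj : Set.InjOn (fun α => sigmaShift (α - cε)) (Pm0 m n ε) := by
      intro α₁ h₁ α₂ h₂ heq
      simp only at heq
      have hle₁ := (hkey α₁ h₁).1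
      have hle₂ := (hkey α₂ h₂).1
      have hz₁ : (α₁ - cε) 0 = 0 := by rw [Finsupp.tsub_apply, h₁.2.1]; exact Nat.zero_sub _
      have hz₂ : (α₂ - cε) 0 = 0 := by rw [Finsupp.tsub_apply, h₂.2.1]; exact Nat.zero_sub _
      have hsub : α₁ - cε = α₂ - cε := by
        rw [← mapDomain_sigmaShift _ hz₁, ← mapDomain_sigmaShift _ hz₂, heq]
      calc α₁ = α₁ - cε + cε := (tsub_add_cancel_of_le (Finsupp.le_def.mpr hle₁)).symm
        _ = α₂ - cε + cε := by rw [hsub]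
        _ = α₂ := tsub_add_cancel_of_le (Finsupp.le_def.mpr hle₂)
    have hsurj : Set.SurjOn (fun α => sigmaShift (α - cε)) (Pm0 m n ε)
        (Pm m (((n : ℤ) - (k + 1) * 2 ^ (m + 1)) / 2)) := by
      rintro β ⟨hbw, hbdv⟩
      have hmap0 : Finsupp.mapDomain Nat.succ β 0 = 0 :=
        Finsupp.mapDomain_notin_range _ _ (by simp [Set.range, Nat.succ_ne_zero])
      have hmapi : ∀ i, 1 ≤ i → Finsupp.mapDomain Nat.succ β i = β (i - 1) := by
        intro i hi
        conv_lhs => rw [show i = Nat.succ (i - 1) by omega]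
        exact Finsupp.mapDomain_apply Nat.succ_injective β _
      have hcε0 : cε 0 = 0 := by
        rw [hcε_apply, if_neg (by simp)]
      refine ⟨Finsupp.mapDomain Nat.succ β + cε, ⟨⟨?_, ?_⟩, ?_, ?_⟩, ?_⟩
      · -- weight
        have hbwn : binWeight (Finsupp.mapDomain Nat.succ β + cε)
            = 2 * binWeight β + (k + 1) * 2 ^ (m + 1) := by
          rw [binWeight_add, binWeight_mapDomain_succ, hbcε, hεm]
        rw [hbwn]
        push_cast
        rw [hbw]
        push_cast at hexact ⊢
        linarith
      · -- divisibility
        intro i hi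
        rw [Finsupp.add_apply]
        rcases Nat.eq_zero_or_pos i with rfl | h1
        · rw [hmap0, hcε0]
          simp
        · refine dvd_add ?_ ?_
          · rw [hmapi i h1]
            exact dvd_trans (pow_dvd_pow 2 (by omega : m + 1 - i ≤ m + 1 - (i - 1)))
              (hbdv (i - 1) (by omega))
          · rw [hcε_apply, if_pos (Finset.mem_Icc.mpr ⟨h1, by omega⟩)]
            exact Dvd.dvd.mul_left dvd_rfl _
      · -- value at 0
        rw [Finsupp.add_apply, hmap0, hcε0]
      · -- congruences
        intro i h1 h2
        rw [Finsupp.add_apply, hmapi i h1, hcε_apply,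
          if_pos (Finset.mem_Icc.mpr ⟨h1, h2⟩)]
        have hb : 2 ^ (m + 2 - i) ∣ β (i - 1) := by
          have := hbdv (i - 1) (by omega)
          rwa [show m + 1 - (i - 1) = m + 2 - i by omega] at this
        simpa using Nat.ModEq.add_right (ε i * 2 ^ (m + 1 - i))
          (Nat.modEq_zero_iff_dvd.mpr hb)
      · -- image
        simp only
        rw [add_tsub_cancel_right, sigmaShift_mapDomain]
    have hbij : Set.BijOn (fun α => sigmaShift (α - cε)) (Pm0 m n ε)
        (Pm m (((n : ℤ) - (k + 1) * 2 ^ (m + 1)) / 2)) := ⟨hmaps, hinj, hsurj⟩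
    refine ⟨by simpa only [hcc] using hbij, ?_⟩
    show Nat.card (Pm0 m n ε) = Nat.card (Pm m (((n : ℤ) - (k + 1) * 2 ^ (m + 1)) / 2))
    exact Nat.card_congr (Set.BijOn.equiv _ hbij)
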